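/- Let H be a subgroup of G. The following are equivalent: (1) there exists a state m on ℓ∞(G) with J¹(G,H) ⊆ Ann_L(m); (2) there exists a state m on ℓ∞(G) with J¹(G,H) + ℂ·ε ⊆ Inv_L(m); (3) ℓ∞(G/H) is relatively amenable. -/

import Mathlib

set_option linter.unusedSectionVars false

open scoped ENNReal ComplexOrder

noncomputable section

namespace QG

variable {G : Type*} [Group G]

/-- `ℓ∞(G)`: bounded complex functions on `G`. -/
abbrev Linf (G : Type*) : Type _ := lp (fun _ : G => ℂ) ∞

/-- `ℓ¹(G)`: summable complex functions on `G`. -/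
abbrev L1 (G : Type*) : Type _ := lp (fun _ : G => ℂ) 1

/-- The dual space `ℓ∞(G)*`. -/
abbrev DualLinf (G : Type*) : Type _ := StrongDual ℂ (Linf G)

lemma summable_norm (f : L1 G) : Summable fun s => ‖f s‖ := by
  have h := (lp.memℓp f).summable (by simp)
  simpa using h

lemma norm_apply_le (x : Linf G) (s : G) : ‖x s‖ ≤ ‖x‖ :=
  lp.norm_apply_le_norm ENNReal.top_ne_zero x s

/-- The constant function `1` in `ℓ∞(G)`. -/
def one' : Linf G :=
  ⟨fun _ => (1 : ℂ), memℓp_infty ⟨1, by rintro r ⟨t, rfl⟩; simp⟩⟩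

/-- Left translation: `(L_s x)(t) = x (s * t)`. -/
def Ltrans (s : G) (x : Linf G) : Linf G :=
  ⟨fun t => x (s * t),
    memℓp_infty (BddAbove.mono (by rintro r ⟨t, rfl⟩; exact ⟨s * t, rfl⟩) (lp.memℓp x).bddAbove)⟩

@[simp] lemma Ltrans_apply (s : G) (x : Linf G) (t : G) : Ltrans s x t = x (s * t) := rfl

lemma norm_Ltrans_le (s : G) (x : Linf G) : ‖Ltrans s x‖ ≤ ‖x‖ := by
  rw [lp.norm_eq_ciSup]
  exact ciSup_le fun t => norm_apply_le x (s * t)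

/-- The action `m * x` of `m ∈ ℓ∞(G)*` on `x ∈ ℓ∞(G)`: `(m*x)(s) = m (L_s x)`. -/
def starAct (m : DualLinf G) (x : Linf G) : Linf G :=
  ⟨fun s => m (Ltrans s x),
    memℓp_infty ⟨‖m‖ * ‖x‖, by
      rintro r ⟨s, rfl⟩
      calc ‖m (Ltrans s x)‖ ≤ ‖m‖ * ‖Ltrans s x‖ := m.le_opNorm _
        _ ≤ ‖m‖ * ‖x‖ :=
          mul_le_mul_of_nonneg_left (norm_Ltrans_le s x) (norm_nonneg m)⟩⟩

@[simp] lemma starAct_apply (m : DualLinf G) (x : Linf G) (s : G) :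
    starAct m x s = m (Ltrans s x) := rfl

lemma summable_mul_bound (f : L1 G) (x : Linf G) (t : G) :
    Summable fun s => ‖f s * x (s * t)‖ := by
  refine Summable.of_nonneg_of_le (fun s => norm_nonneg _) (fun s => ?_)
    ((summable_norm f).mul_right ‖x‖)
  rw [norm_mul]
  exact mul_le_mul_of_nonneg_left (norm_apply_le x (s * t)) (norm_nonneg _)

/-- The right action of `ℓ¹(G)` on `ℓ∞(G)`: `(x * f)(t) = ∑_s f s * x (s * t)`. -/
def rAct (x : Linf G) (f : L1 G) : Linf G :=
  ⟨fun t => ∑' s, f s * x (s * t),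
    memℓp_infty ⟨(∑' s, ‖f s‖) * ‖x‖, by
      rintro r ⟨t, rfl⟩
      calc ‖∑' s, f s * x (s * t)‖ ≤ ∑' s, ‖f s * x (s * t)‖ :=
            norm_tsum_le_tsum_norm (summable_mul_bound f x t)
        _ ≤ ∑' s, ‖f s‖ * ‖x‖ :=
            Summable.tsum_le_tsum (fun s => by
                rw [norm_mul]
                exact mul_le_mul_of_nonneg_left (norm_apply_le x (s * t)) (norm_nonneg _))
              (summable_mul_bound f x t) ((summable_norm f).mul_right _)
        _ = (∑' s, ‖f s‖) * ‖x‖ := tsum_mul_right⟩⟩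

@[simp] lemma rAct_apply (x : Linf G) (f : L1 G) (t : G) :
    rAct x f t = ∑' s, f s * x (s * t) := rfl

/-- The shear equivalence of `G × G`. -/
def shearEquiv (G : Type*) [Group G] : G × G ≃ G × G where
  toFun p := (p.2, p.2⁻¹ * p.1)
  invFun p := (p.1 * p.2, p.1)
  left_inv p := by simp
  right_inv p := by simp

lemma conv_prod_summable (f g : L1 G) :
    Summable fun p : G × G => ‖f p.2‖ * ‖g (p.2⁻¹ * p.1)‖ := by
  have h0 : Summable fun p : G × G => ‖f p.1‖ * ‖g p.2‖ :=
    (summable_norm f).mul_of_nonneg (summable_norm g) (fun _ => norm_nonneg _)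
      (fun _ => norm_nonneg _)
  have key : Summable ((fun p : G × G => ‖f p.1‖ * ‖g p.2‖) ∘ (shearEquiv G)) :=
    (shearEquiv G).summable_iff.mpr h0
  have heq : ((fun p : G × G => ‖f p.1‖ * ‖g p.2‖) ∘ (shearEquiv G)) =
      fun p : G × G => ‖f p.2‖ * ‖g (p.2⁻¹ * p.1)‖ := by
    funext p
    simp [shearEquiv, Function.comp]
  rwa [heq] at key

lemma conv_memℓp (f g : L1 G) : Memℓp (fun t : G => ∑' s, f s * g (s⁻¹ * t)) 1 := by
  have hp := conv_prod_summable f g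
  obtain ⟨h1, h2⟩ :=
    (summable_prod_of_nonneg (fun p => mul_nonneg (norm_nonneg _) (norm_nonneg _))).1 hp
  apply memℓp_gen
  simp only [ENNReal.toReal_one, Real.rpow_one]
  refine Summable.of_nonneg_of_le (fun t => norm_nonneg _) (fun t => ?_) h2
  calc ‖∑' s, f s * g (s⁻¹ * t)‖ ≤ ∑' s, ‖f s * g (s⁻¹ * t)‖ :=
        norm_tsum_le_tsum_norm (by simpa only [norm_mul] using h1 t)
    _ = ∑' s, ‖f s‖ * ‖g (s⁻¹ * t)‖ := tsum_congr fun s => norm_mul _ _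

/-- Convolution on `ℓ¹(G)`: `(f * g)(t) = ∑_s f s * g (s⁻¹ t)`. -/
def conv (f g : L1 G) : L1 G :=
  ⟨fun t => ∑' s, f s * g (s⁻¹ * t), conv_memℓp f g⟩

@[simp] lemma conv_apply (f g : L1 G) (t : G) : conv f g t = ∑' s, f s * g (s⁻¹ * t) := rfl

open Classical in
/-- The unit `ε = δ_e` of the convolution algebra `ℓ¹(G)`. -/
def eps : L1 G :=
  ⟨fun t => if t = 1 then 1 else 0, by
    apply memℓp_gen
    refine summable_of_ne_finset_zero (s := ({1} : Finset G)) ?_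
    intro t ht
    simp only [Finset.mem_singleton] at ht
    simp [ht]⟩

open Classical in
/-- Multiplication by the indicator function of `H`: `f · 1_H`. -/
def mulIndic (H : Subgroup G) (f : L1 G) : L1 G :=
  ⟨fun s => if s ∈ H then f s else 0, by
    apply memℓp_gen
    simp only [ENNReal.toReal_one, Real.rpow_one]
    refine Summable.of_nonneg_of_le (fun s => norm_nonneg _) (fun s => ?_) (summable_norm f)
    by_cases h : s ∈ H <;> simp [h]⟩

open Classical in
/-- The indicator function `1_H ∈ ℓ∞(G)` of a subgroup `H`. -/
def indic (H : Subgroup G) : Linf G :=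
  ⟨fun s => if s ∈ H then 1 else 0,
    memℓp_infty ⟨1, by rintro r ⟨s, rfl⟩; by_cases h : s ∈ H <;> simp [h]⟩⟩

/-- A state on `ℓ∞(G)`: unital positive functional. -/
def IsState (m : DualLinf G) : Prop :=
  m one' = 1 ∧ ∀ x : Linf G, (∀ s, 0 ≤ x s) → 0 ≤ m x

/-- `f ∈ Ann_L(m)`, i.e. `f * m = 0`. -/
def memAnnL (m : DualLinf G) (f : L1 G) : Prop :=
  ∀ x : Linf G, ∑' s, f s * m (Ltrans s x) = 0

/-- `f ∈ Inv_L(m, x₀)`, i.e. `f * m = f(x₀) · m`. -/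
def memInvLx (m : DualLinf G) (x₀ : Linf G) (f : L1 G) : Prop :=
  ∀ x : Linf G, ∑' s, f s * m (Ltrans s x) = (∑' s, f s * x₀ s) * m x

/-- `f ∈ Inv_L(m)`, i.e. `f * m = f(1) · m`. -/
def memInvL (m : DualLinf G) (f : L1 G) : Prop :=
  ∀ x : Linf G, ∑' s, f s * m (Ltrans s x) = (∑' s, f s) * m x

/-- A right idempotent state: a state with `m (m * x) = m x` for all `x`. -/
def IsRightIdempotentState (m : DualLinf G) : Prop :=
  IsState m ∧ ∀ x : Linf G, m (starAct m x) = m x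

/-- A character of `G` in `ℓ∞(G)`. -/
def IsCharacter (x : Linf G) : Prop :=
  (∀ s t : G, x (s * t) = x s * x t) ∧ ∀ s : G, ‖x s‖ = 1

/-- `ℓ∞(G/H)`, the right-`H`-invariant elements of `ℓ∞(G)`. -/
def LinfQuot (H : Subgroup G) : Set (Linf G) :=
  {x | ∀ s : G, ∀ h ∈ H, x (s * h) = x s}

/-- `J¹(G,H)`, the preannihilator of `ℓ∞(G/H)` in `ℓ¹(G)`. -/
def J1 (H : Subgroup G) : Set (L1 G) :=
  {f | ∀ x ∈ LinfQuot H, ∑' s, f s * x s = 0}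

/-- `E` witnesses relative amenability of `ℓ∞(G/H)`: a unital positive
`ℓ¹(G)`-module map `ℓ∞(G) → ℓ∞(G)` with range inside `ℓ∞(G/H)`. -/
def IsRelAmenMap (H : Subgroup G) (E : Linf G →ₗ[ℂ] Linf G) : Prop :=
  E one' = one' ∧
  (∀ x : Linf G, (∀ s, 0 ≤ x s) → ∀ s, 0 ≤ E x s) ∧
  (∀ x : Linf G, E x ∈ LinfQuot H) ∧
  (∀ (x : Linf G) (f : L1 G), E (rAct x f) = rAct (E x) f)

/-- `ℓ∞(G/H)` is relatively amenable. -/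
def RelAmen (H : Subgroup G) : Prop :=
  ∃ E : Linf G →ₗ[ℂ] Linf G, IsRelAmenMap H E

/-- `ℓ∞(G/H)` is amenable. -/
def Amen (H : Subgroup G) : Prop :=
  ∃ E : Linf G →ₗ[ℂ] Linf G, IsRelAmenMap H E ∧ ∀ x ∈ LinfQuot H, E x = x

/-- Amenability of a discrete group: existence of a left invariant mean. -/
def GroupAmenable (K : Type*) [Group K] : Prop :=
  ∃ μ : DualLinf K, IsState μ ∧ ∀ (k : K) (y : Linf K), μ (Ltrans k y) = μ y

/-- `H`-invariance of a functional on `ℓ∞(G)`. -/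
def HInvariant (H : Subgroup G) (μ : DualLinf G) : Prop :=
  ∀ h ∈ H, ∀ x : Linf G, μ (Ltrans h x) = μ x

/-- `J` has a bounded right approximate identity contained in `S`. -/
def HasBraiIn (J S : Set (L1 G)) : Prop :=
  ∃ (ι : Type) (l : Filter ι) (e : ι → L1 G), l.NeBot ∧
    (∃ C : ℝ, ∀ i, ‖e i‖ ≤ C) ∧ (∀ i, e i ∈ S) ∧
    ∀ f ∈ J, Filter.Tendsto (fun i => ‖conv f (e i) - f‖) l (nhds 0)

lemma one'_mem_LinfQuot (H : Subgroup G) : (one' : Linf G) ∈ LinfQuot H :=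
  fun _ _ _ => rfl

lemma Ltrans_mem_LinfQuot {H : Subgroup G} {x : Linf G} (hx : x ∈ LinfQuot H) (s : G) :
    Ltrans s x ∈ LinfQuot H := by
  intro t h hh
  show x (s * (t * h)) = x (s * t)
  rw [← mul_assoc]
  exact hx (s * t) h hh

/-- `ℓ∞(G/H)` as a subspace of `ℓ∞(G)`. -/
def LinfQuotSub (H : Subgroup G) : Submodule ℂ (Linf G) where
  carrier := LinfQuot H
  add_mem' := by
    intro a b ha hb s h hh
    show (a + b : Linf G) (s * h) = (a + b : Linf G) s
    rw [lp.coeFn_add]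
    simp only [Pi.add_apply]
    rw [ha s h hh, hb s h hh]
  zero_mem' := by
    intro s h hh
    show (0 : Linf G) (s * h) = (0 : Linf G) s
    rw [lp.coeFn_zero]
    simp
  smul_mem' := by
    intro c a ha s h hh
    show (c • a : Linf G) (s * h) = (c • a : Linf G) s
    rw [lp.coeFn_smul]
    simp only [Pi.smul_apply]
    rw [ha s h hh]

/-- The weak* topology on `ℓ∞(G) = ℓ¹(G)*`: the topology induced by the
pairings against elements of `ℓ¹(G)`. -/
def weakStarTop (G : Type*) [Group G] : TopologicalSpace (Linf G) :=
  TopologicalSpace.induced (fun (y : Linf G) => fun f : L1 G => ∑' s, f s * y s)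
    Pi.topologicalSpace

section Helpers

lemma lp_ext' {f g : Linf G} (h : ∀ t, f t = g t) : f = g := lp.ext (funext h)

@[simp] lemma one'_apply (s : G) : (one' : Linf G) s = 1 := rfl

/-- Evaluation at a point as a continuous linear functional on `ℓ∞(G)`. -/
def evalCLM (t : G) : Linf G →L[ℂ] ℂ :=
  LinearMap.mkContinuous
    { toFun := fun y : Linf G => y t
      map_add' := fun a b => by show (a + b) t = a t + b t; rw [lp.coeFn_add]; rfl
      map_smul' := fun c a => by show (c • a) t = c • (a t); rw [lp.coeFn_smul]; rfl }
    1 (fun y => by rw [one_mul]; exact norm_apply_le y t)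

@[simp] lemma evalCLM_apply (t : G) (y : Linf G) : evalCLM t y = y t := rfl

lemma Ltrans_add (s : G) (x y : Linf G) : Ltrans s (x + y) = Ltrans s x + Ltrans s y :=
  lp_ext' fun t => by simp [lp.coeFn_add, Pi.add_apply]

lemma Ltrans_smul (s : G) (c : ℂ) (x : Linf G) : Ltrans s (c • x) = c • Ltrans s x :=
  lp_ext' fun t => by simp [lp.coeFn_smul, Pi.smul_apply]

lemma Ltrans_one' (s : G) : Ltrans s (one' : Linf G) = one' := lp_ext' fun _ => rfl

lemma Ltrans_one (x : Linf G) : Ltrans 1 x = x := lp_ext' fun t => by simp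

lemma summable_coe (f : L1 G) : Summable fun s => f s :=
  Summable.of_norm (summable_norm f)

lemma summable_mul_of_bdd (f : L1 G) {y : G → ℂ} {C : ℝ} (h : ∀ s, ‖y s‖ ≤ C) :
    Summable fun s => f s * y s :=
  Summable.of_norm (Summable.of_nonneg_of_le (fun _ => norm_nonneg _)
    (fun s => by rw [norm_mul]; exact mul_le_mul_of_nonneg_left (h s) (norm_nonneg _))
    ((summable_norm f).mul_right C))

lemma summable_mul_m (f : L1 G) (m : DualLinf G) (x : Linf G) :
    Summable fun s => f s * m (Ltrans s x) :=
  summable_mul_of_bdd f (C := ‖m‖ * ‖x‖) fun s =>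
    le_trans (m.le_opNorm _) (mul_le_mul_of_nonneg_left (norm_Ltrans_le s x) (norm_nonneg m))

lemma summable_smul_Ltrans (f : L1 G) (x : Linf G) (σ : G → G) :
    Summable fun s => f s • Ltrans (σ s) x :=
  Summable.of_norm (Summable.of_nonneg_of_le (fun _ => norm_nonneg _)
    (fun s => by rw [norm_smul]; exact mul_le_mul_of_nonneg_left (norm_Ltrans_le _ x) (norm_nonneg _))
    ((summable_norm f).mul_right ‖x‖))

lemma Ltrans_rAct (x : Linf G) (f : L1 G) (t : G) :
    Ltrans t (rAct x f) = ∑' s, f s • Ltrans (s * t) x := by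
  have hs := summable_smul_Ltrans f x (fun s => s * t)
  refine lp_ext' fun u => ?_
  have h1 : (∑' s, f s • Ltrans (s * t) x) u = ∑' s, f s * x (s * t * u) := by
    rw [show (∑' s, f s • Ltrans (s * t) x) u = evalCLM u (∑' s, f s • Ltrans (s * t) x) from rfl,
      (evalCLM u).map_tsum hs]
    exact tsum_congr fun s => by simp [smul_eq_mul]
  rw [h1]
  show rAct x f (t * u) = _
  rw [rAct_apply]
  exact tsum_congr fun s => by rw [mul_assoc]

lemma rAct_eq_tsum (x : Linf G) (f : L1 G) : rAct x f = ∑' s, f s • Ltrans s x := by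
  have := Ltrans_rAct x f 1
  simpa [Ltrans_one] using this

end Helpers
section Helpers2

open Classical in
/-- The Dirac function at `a` in `ℓ¹(G)`. -/
def dirac (a : G) : L1 G :=
  ⟨fun t => if t = a then 1 else 0, by
    apply memℓp_gen
    refine summable_of_ne_finset_zero (s := ({a} : Finset G)) ?_
    intro t ht
    simp only [Finset.mem_singleton] at ht
    simp [ht]⟩

open Classical in
@[simp] lemma dirac_apply (a t : G) : (dirac a : L1 G) t = if t = a then 1 else 0 := rfl

open Classical in
@[simp] lemma eps_apply (t : G) : (eps : L1 G) t = if t = 1 then 1 else 0 := rfl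

lemma summable_dirac_mul (a : G) (y : G → ℂ) : Summable fun t => (dirac a : L1 G) t * y t :=
  summable_of_ne_finset_zero (s := ({a} : Finset G)) fun t ht => by
    simp only [Finset.mem_singleton] at ht
    simp [ht]

lemma tsum_dirac_mul (a : G) (y : G → ℂ) : ∑' t, (dirac a : L1 G) t * y t = y a := by
  rw [tsum_eq_single a (fun t ht => by simp [ht])]
  simp

lemma summable_eps_mul (c : ℂ) (y : G → ℂ) : Summable fun t => c * (eps : L1 G) t * y t :=
  summable_of_ne_finset_zero (s := ({(1 : G)} : Finset G)) fun t ht => by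
    simp only [Finset.mem_singleton] at ht
    simp [ht]

lemma tsum_eps_mul (c : ℂ) (y : G → ℂ) : ∑' t, c * (eps : L1 G) t * y t = c * y 1 := by
  rw [tsum_eq_single 1 (fun t ht => by simp [ht])]
  simp

lemma J1_tsum_eq_zero {H : Subgroup G} {f : L1 G} (hf : f ∈ J1 H) : ∑' s, f s = 0 := by
  have := hf one' (one'_mem_LinfQuot H)
  simpa using this

lemma dirac_sub_mem_J1 {H : Subgroup G} (s : G) {h : G} (hh : h ∈ H) :
    (dirac (s * h) - dirac s : L1 G) ∈ J1 H := by
  intro y hy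
  have hc : ∀ t, (dirac (s * h) - dirac s : L1 G) t * y t
      = (dirac (s * h) : L1 G) t * y t - (dirac s : L1 G) t * y t := fun t => by
    rw [lp.coeFn_sub]; simp [sub_mul]
  rw [tsum_congr hc, Summable.tsum_sub (summable_dirac_mul _ _) (summable_dirac_mul _ _),
    tsum_dirac_mul, tsum_dirac_mul, hy s h hh, sub_self]

end Helpers2
section Helpers3

lemma tsum_dirac_sub_mul (a b : G) (y : G → ℂ) :
    ∑' t, (dirac a - dirac b : L1 G) t * y t = y a - y b := by
  have hc : ∀ t, (dirac a - dirac b : L1 G) t * y t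
      = (dirac a : L1 G) t * y t - (dirac b : L1 G) t * y t := fun t => by
    rw [lp.coeFn_sub]; simp [sub_mul]
  rw [tsum_congr hc, Summable.tsum_sub (summable_dirac_mul _ _) (summable_dirac_mul _ _),
    tsum_dirac_mul, tsum_dirac_mul]

lemma relAmen_of_ann {H : Subgroup G} (m : DualLinf G) (hm : IsState m)
    (hann : ∀ f ∈ J1 H, memAnnL m f) : RelAmen H := by
  refine ⟨{ toFun := fun x => starAct m x
            map_add' := fun x y => lp_ext' fun s => by
              rw [lp.coeFn_add]
              show m (Ltrans s (x + y)) = starAct m x s + starAct m y s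
              rw [Ltrans_add, map_add]; rfl
            map_smul' := fun c x => lp_ext' fun s => by
              rw [lp.coeFn_smul]
              show m (Ltrans s (c • x)) = c • starAct m x s
              rw [Ltrans_smul, map_smul]; rfl }, ?_, ?_, ?_, ?_⟩
  · exact lp_ext' fun s => by
      show m (Ltrans s one') = (1 : ℂ)
      rw [Ltrans_one']; exact hm.1
  · intro x hx s
    exact hm.2 _ (fun t => hx (s * t))
  · intro x s h hh
    show m (Ltrans (s * h) x) = m (Ltrans s x)
    have hf := hann _ (dirac_sub_mem_J1 s hh) x
    rw [tsum_dirac_sub_mul (s * h) s (fun t => m (Ltrans t x))] at hf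
    linear_combination hf
  · intro x f
    refine lp_ext' fun t => ?_
    show m (Ltrans t (rAct x f)) = rAct (starAct m x) f t
    rw [Ltrans_rAct, m.map_tsum (summable_smul_Ltrans f x _), rAct_apply]
    exact tsum_congr fun s => by simp [smul_eq_mul]

end Helpers3
section Helpers4

lemma norm_re_coe_le (y : Linf G) (s : G) : ‖(((y s).re : ℝ) : ℂ)‖ ≤ ‖y‖ := by
  rw [Complex.norm_real, Real.norm_eq_abs]
  refine le_trans ?_ (norm_apply_le y s)
  exact Complex.abs_re_le_norm _

lemma norm_im_coe_le (y : Linf G) (s : G) : ‖(((y s).im : ℝ) : ℂ)‖ ≤ ‖y‖ := by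
  rw [Complex.norm_real, Real.norm_eq_abs]
  refine le_trans ?_ (norm_apply_le y s)
  exact Complex.abs_im_le_norm _

/-- The real part of an element of `ℓ∞(G)`. -/
def rePart (y : Linf G) : Linf G :=
  ⟨fun s => (((y s).re : ℝ) : ℂ), memℓp_infty ⟨‖y‖, by rintro r ⟨s, rfl⟩; exact norm_re_coe_le y s⟩⟩

/-- The imaginary part of an element of `ℓ∞(G)`. -/
def imPart (y : Linf G) : Linf G :=
  ⟨fun s => (((y s).im : ℝ) : ℂ), memℓp_infty ⟨‖y‖, by rintro r ⟨s, rfl⟩; exact norm_im_coe_le y s⟩⟩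

@[simp] lemma rePart_apply (y : Linf G) (s : G) : rePart y s = (((y s).re : ℝ) : ℂ) := rfl
@[simp] lemma imPart_apply (y : Linf G) (s : G) : imPart y s = (((y s).im : ℝ) : ℂ) := rfl

lemma norm_rePart_le (y : Linf G) : ‖rePart y‖ ≤ ‖y‖ := by
  rw [lp.norm_eq_ciSup]
  exact ciSup_le fun s => norm_re_coe_le y s

lemma norm_imPart_le (y : Linf G) : ‖imPart y‖ ≤ ‖y‖ := by
  rw [lp.norm_eq_ciSup]
  exact ciSup_le fun s => norm_im_coe_le y s

lemma eq_re_add_I_im (y : Linf G) : y = rePart y + Complex.I • imPart y := by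
  refine lp_ext' fun s => ?_
  rw [lp.coeFn_add, Pi.add_apply, lp.coeFn_smul, Pi.smul_apply, rePart_apply, imPart_apply,
    smul_eq_mul, mul_comm, Complex.re_add_im]

lemma E_eval_one_bound_real {H : Subgroup G} {E : Linf G →ₗ[ℂ] Linf G}
    (hE : IsRelAmenMap H E) (z : Linf G) (hz : ∀ s, (z s).im = 0) : ‖E z 1‖ ≤ ‖z‖ := by
  set a : ℝ := ‖z‖ with ha
  have hre : ∀ s, |(z s).re| ≤ a := fun s => by
    refine le_trans ?_ (norm_apply_le z s)
    exact Complex.abs_re_le_norm _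
  have key : ∀ w : Linf G, (∀ s, 0 ≤ ((a : ℂ) • one' + w : Linf G) s) →
      0 ≤ ((a : ℂ) + E w 1) := by
    intro w hc
    have := hE.2.1 _ hc 1
    rwa [map_add, map_smul, hE.1, lp.coeFn_add, Pi.add_apply, lp.coeFn_smul, Pi.smul_apply,
      one'_apply, smul_eq_mul, mul_one] at this
  have hplus : 0 ≤ ((a : ℂ) + E z 1) := by
    refine key _ fun s => ?_
    rw [lp.coeFn_add, Pi.add_apply, lp.coeFn_smul, Pi.smul_apply, one'_apply, smul_eq_mul, mul_one,
      Complex.le_def]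
    constructor
    · simp only [Complex.zero_re, Complex.add_re, Complex.ofReal_re]
      have := abs_le.1 (hre s); linarith
    · simp [hz s]
  have hminus : 0 ≤ ((a : ℂ) + E (-z) 1) := by
    refine key _ fun s => ?_
    rw [lp.coeFn_add, Pi.add_apply, lp.coeFn_smul, Pi.smul_apply, one'_apply, smul_eq_mul, mul_one,
      Complex.le_def]
    have hns : (-z : Linf G) s = -(z s) := by rw [lp.coeFn_neg]; rfl
    constructor
    · simp only [Complex.zero_re, Complex.add_re, Complex.ofReal_re, hns, Complex.neg_re]
      have := abs_le.1 (hre s); linarith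
    · simp [hns, hz s]
  rw [map_neg] at hminus
  have hneg : (-(E z) : Linf G) 1 = -(E z 1) := by rw [lp.coeFn_neg]; rfl
  rw [hneg] at hminus
  rw [Complex.le_def] at hplus hminus
  obtain ⟨h1r, h1i⟩ := hplus
  obtain ⟨h2r, h2i⟩ := hminus
  simp only [Complex.zero_re, Complex.zero_im, Complex.add_re, Complex.add_im,
    Complex.ofReal_re, Complex.ofReal_im, Complex.neg_re, Complex.neg_im] at h1r h1i h2r h2i
  have him : (E z 1).im = 0 := by linarith
  have : E z 1 = (((E z 1).re : ℝ) : ℂ) := Complex.ext (by simp) (by simp [him])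
  rw [this, Complex.norm_real, Real.norm_eq_abs, abs_le]
  constructor <;> linarith

lemma E_eval_one_bound {H : Subgroup G} {E : Linf G →ₗ[ℂ] Linf G}
    (hE : IsRelAmenMap H E) (y : Linf G) : ‖E y 1‖ ≤ 2 * ‖y‖ := by
  have h1 : ‖E (rePart y) 1‖ ≤ ‖rePart y‖ :=
    E_eval_one_bound_real hE (rePart y) (fun s => by simp)
  have h2 : ‖E (imPart y) 1‖ ≤ ‖imPart y‖ :=
    E_eval_one_bound_real hE (imPart y) (fun s => by simp)
  calc ‖E y 1‖ = ‖E (rePart y) 1 + Complex.I * E (imPart y) 1‖ := by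
        conv_lhs => rw [eq_re_add_I_im y]
        rw [map_add, map_smul, lp.coeFn_add, Pi.add_apply, lp.coeFn_smul, Pi.smul_apply,
          smul_eq_mul]
    _ ≤ ‖E (rePart y) 1‖ + ‖Complex.I * E (imPart y) 1‖ := norm_add_le _ _
    _ ≤ ‖rePart y‖ + ‖imPart y‖ := by
        rw [norm_mul, Complex.norm_I, one_mul]
        exact add_le_add h1 h2
    _ ≤ 2 * ‖y‖ := by
        have := norm_rePart_le y; have := norm_imPart_le y; linarith

lemma ann_of_relAmen {H : Subgroup G} (hra : RelAmen H) :
    ∃ m : DualLinf G, IsState m ∧ ∀ f ∈ J1 H, memAnnL m f := by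
  obtain ⟨E, hE⟩ := hra
  set m : DualLinf G := LinearMap.mkContinuous
    { toFun := fun y : Linf G => E y 1
      map_add' := fun a b => by
        show (E (a + b) : Linf G) 1 = (E a : Linf G) 1 + (E b : Linf G) 1
        rw [map_add, lp.coeFn_add]; rfl
      map_smul' := fun c a => by
        show (E (c • a) : Linf G) 1 = c • (E a : Linf G) 1
        rw [map_smul, lp.coeFn_smul]; rfl }
    2 (E_eval_one_bound hE) with hmdef
  have hmy : ∀ y : Linf G, m y = E y 1 := fun y => rfl
  refine ⟨m, ⟨?_, ?_⟩, ?_⟩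
  · rw [hmy, hE.1]; rfl
  · intro x hx; rw [hmy]; exact hE.2.1 x hx 1
  · intro f hf x
    have h1 : m (rAct x f) = ∑' s, f s * m (Ltrans s x) := by
      rw [rAct_eq_tsum, m.map_tsum (summable_smul_Ltrans f x (fun s => s))]
      exact tsum_congr fun s => by rw [map_smul, smul_eq_mul]
    rw [← h1, hmy, hE.2.2.2 x f, rAct_apply]
    have h2 : ∑' s, f s * E x (s * 1) = ∑' s, f s * E x s :=
      tsum_congr fun s => by rw [mul_one]
    rw [h2]
    exact hf (E x) (hE.2.2.1 x)

end Helpers4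
/-- characterizations of relative amenability of `ℓ∞(G/H)`. -/
theorem statement5 (H : Subgroup G) :
    [(∃ m : DualLinf G, IsState m ∧ ∀ f ∈ J1 H, memAnnL m f),
     (∃ m : DualLinf G, IsState m ∧ ∀ f ∈ J1 H, ∀ c : ℂ, memInvL m (f + c • eps)),
     RelAmen H].TFAE := by
  tfae_have 1 → 2 := by
    rintro ⟨m, hm, hann⟩
    refine ⟨m, hm, ?_⟩
    intro f hf c x
    have hc : ∀ s : G, (f + c • eps : L1 G) s = f s + c * (eps : L1 G) s := fun s => by
      rw [lp.coeFn_add, Pi.add_apply, lp.coeFn_smul, Pi.smul_apply, smul_eq_mul]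
    have hL : ∑' s, (f + c • eps : L1 G) s * m (Ltrans s x) = c * m x := by
      have h1 : ∀ s : G, (f + c • eps : L1 G) s * m (Ltrans s x)
          = f s * m (Ltrans s x) + c * (eps : L1 G) s * m (Ltrans s x) := fun s => by
        rw [hc s, add_mul, mul_assoc]
      rw [tsum_congr h1, Summable.tsum_add (summable_mul_m f m x) (summable_eps_mul c _),
        hann f hf x, tsum_eps_mul, Ltrans_one, zero_add]
    have hR : ∑' s, (f + c • eps : L1 G) s = c := by
      have h1 : ∀ s : G, (f + c • eps : L1 G) s = f s + c * (eps : L1 G) s * 1 := fun s => by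
        rw [hc s, mul_one]
      rw [tsum_congr h1, Summable.tsum_add (summable_coe f) (summable_eps_mul c (fun _ => 1)),
        J1_tsum_eq_zero hf, tsum_eps_mul, zero_add, mul_one]
    rw [hL, hR]
  tfae_have 2 → 1 := by
    rintro ⟨m, hm, hinv⟩
    refine ⟨m, hm, ?_⟩
    intro f hf x
    have h := hinv f hf 0 x
    rw [zero_smul, add_zero, J1_tsum_eq_zero hf, zero_mul] at h
    exact h
  tfae_have 1 → 3 := by
    rintro ⟨m, hm, hann⟩
    exact relAmen_of_ann m hm hann
  tfae_have 3 → 1 := ann_of_relAmen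
  tfae_finish

end QG
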